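/- With K as in the recursive construction (first row/column as specified, lower-right block m·M), if additionally M satisfies q̄ M = q̄ where q̄ = (q_2,…,q_n)/(1 − q_1), then qK = q, i.e., Σ_i q_i K_{ij} = q_j for every j. -/

import Mathlib

open Finset

/-- If additionally the inner mechanism `M` keeps the renormalized prior
`q̄ = (q_2, …, q_n)/(1 - q_1)` invariant, then the recursively constructed `K`
keeps `q` invariant: `qK = q`. -/
theorem recursive_K_invariant (n : ℕ) (ε : ℝ) (hε : 0 ≤ ε)
    (q : Fin (n + 1) → ℝ) (hqpos : ∀ i, 0 < q i) (hqmono : Monotone q)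
    (hqsum : ∑ i, q i = 1)
    (M : Matrix (Fin n) (Fin n) ℝ)
    (hMnn : ∀ i j, 0 ≤ M i j) (hMrow : ∀ i, ∑ j, M i j = 1)
    (hMinv : ∀ j : Fin n, ∑ i, (q i.succ / (1 - q 0)) * M i j = q j.succ / (1 - q 0))
    (K : Matrix (Fin (n + 1)) (Fin (n + 1)) ℝ)
    (hK11 : K 0 0 = Real.exp ε * q 0 / (Real.exp ε * q 0 + 1 - q 0))
    (hKi1 : ∀ i : Fin n, K i.succ 0 = q 0 / (Real.exp ε * q 0 + 1 - q 0))
    (hK1j : ∀ j : Fin n, K 0 j.succ = q j.succ / (Real.exp ε * q 0 + 1 - q 0))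
    (hKij : ∀ i j : Fin n, K i.succ j.succ =
      (1 - q 0 / (Real.exp ε * q 0 + 1 - q 0)) * M i j) :
    ∀ j, ∑ i, q i * K i j = q j := by
  have hd : (0:ℝ) < Real.exp ε * q 0 + 1 - q 0 := by
    nlinarith [Real.one_le_exp hε, (hqpos 0)]
  have hsum' : ∑ i : Fin n, q i.succ = 1 - q 0 := by
    rw [Fin.sum_univ_succ] at hqsum; linarith
  intro j
  induction j using Fin.cases with
  | zero =>
    rw [Fin.sum_univ_succ, hK11]
    simp only [hKi1]
    rw [← Finset.sum_mul, hsum']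
    rw [mul_div_assoc', mul_div_assoc', ← add_div, div_eq_iff hd.ne']
    ring
  | succ j =>
    have h1q : 0 < 1 - q 0 := by
      rw [← hsum']
      exact Finset.sum_pos (fun i _ => hqpos i.succ) ⟨j, Finset.mem_univ j⟩
    have hM : ∑ i : Fin n, q i.succ * M i j = q j.succ := by
      have h := hMinv j
      calc ∑ i : Fin n, q i.succ * M i j
          = (1 - q 0) * ∑ i : Fin n, q i.succ / (1 - q 0) * M i j := by
            rw [Finset.mul_sum]
            apply Finset.sum_congr rfl
            intro i _
            field_simp
        _ = q j.succ := by rw [h]; field_simp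
    rw [Fin.sum_univ_succ, hK1j]
    simp only [hKij]
    have : ∑ i : Fin n, q i.succ * ((1 - q 0 / (Real.exp ε * q 0 + 1 - q 0)) * M i j)
        = (1 - q 0 / (Real.exp ε * q 0 + 1 - q 0)) * ∑ i : Fin n, q i.succ * M i j := by
      rw [Finset.mul_sum]; apply Finset.sum_congr rfl; intro i _; ring
    rw [this, hM]
    field_simp
    ring
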